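/- arXiv:1902.06434 — 2 statements merged into one kernel-verified Lean document; each statement's English description precedes it below -/
import Mathlib

section
/- Let 1<p,q<∞ with 1/p+1/q=1 and let μ be a compactly supported Borel probability measure on ℝ (support in [-M,M]). Let Λ = {λ_n : n∈ℕ} and Ω = {ω_n : n∈ℕ} be subsets of ℝ such that |λ_n − ω_n| ≤ C for all n. If {e_{λ_n}}_{n∈ℕ} is a q-Bessel for L^p(μ) with bound B, then {e_{ω_n}}_{n∈ℕ} is a q-Bessel for L^p(μ) with bound ( B^{1/q} + ( B (e^{C^p} − 1)^{q−1} (e^{(2πM)^q} − 1) )^{1/q} )^q. -/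
open MeasureTheory Complex Filter
open scoped ENNReal NNReal Real

/-- The Fourier transform of the measure `f dμ` on `ℝ` at `t`. -/
noncomputable def FT1 (μ : Measure ℝ) (f : ℝ → ℂ) (t : ℝ) : ℂ :=
  ∫ x, f x * Complex.exp (-(2 * Real.pi * t * x : ℝ) * Complex.I) ∂μ

section helpers

variable {q : ℝ}

lemma rpow_iSup {ι : Sort*} [Nonempty ι] (hq : 0 < q) (g : ι → ℝ≥0∞) :
    (⨆ i, g i) ^ q = ⨆ i, g i ^ q := by
  apply le_antisymm
  · have h1 : (⨆ i, g i) ≤ (⨆ i, g i ^ q) ^ (1/q) := by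
      refine iSup_le fun i => ?_
      have : g i = (g i ^ q) ^ (1/q) := by
        rw [← ENNReal.rpow_mul, mul_one_div_cancel hq.ne', ENNReal.rpow_one]
      rw [this]
      exact ENNReal.rpow_le_rpow (le_iSup (fun i => g i ^ q) i) (by positivity)
    calc (⨆ i, g i) ^ q ≤ ((⨆ i, g i ^ q) ^ (1/q)) ^ q :=
          ENNReal.rpow_le_rpow h1 hq.le
      _ = ⨆ i, g i ^ q := by
          rw [← ENNReal.rpow_mul, one_div_mul_cancel hq.ne', ENNReal.rpow_one]
  · exact iSup_le fun i => ENNReal.rpow_le_rpow (le_iSup g i) hq.le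

lemma holder_tsum {p : ℝ} (hpq : p.HolderConjugate q) (f g : ℕ → ℝ≥0∞) :
    ∑' k, f k * g k ≤ (∑' k, f k ^ p) ^ (1/p) * (∑' k, g k ^ q) ^ (1/q) := by
  rw [ENNReal.tsum_eq_iSup_sum]
  refine iSup_le fun s => ?_
  refine (ENNReal.inner_le_Lp_mul_Lq s f g hpq).trans ?_
  have h1 : (0:ℝ) ≤ 1/p := le_of_lt hpq.one_div_pos
  have h2 : (0:ℝ) ≤ 1/q := le_of_lt hpq.symm.one_div_pos
  exact mul_le_mul' (ENNReal.rpow_le_rpow (ENNReal.sum_le_tsum s) h1)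
    (ENNReal.rpow_le_rpow (ENNReal.sum_le_tsum s) h2)

lemma minkowski_tsum_two (hq : 1 ≤ q) (f g : ℕ → ℝ≥0∞) :
    (∑' n, (f n + g n) ^ q) ^ (1/q) ≤ (∑' n, f n ^ q) ^ (1/q) + (∑' n, g n ^ q) ^ (1/q) := by
  have hq0 : (0:ℝ) < q := lt_of_lt_of_le zero_lt_one hq
  have key : ∀ t : Finset ℕ, ∑ n ∈ t, (f n + g n) ^ q ≤
      ((∑' n, f n ^ q) ^ (1/q) + (∑' n, g n ^ q) ^ (1/q)) ^ q := by
    intro t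
    have h1 := ENNReal.Lp_add_le t f g hq
    have h2 : (∑ n ∈ t, (f n + g n) ^ q) ^ (1/q) ≤
        (∑' n, f n ^ q) ^ (1/q) + (∑' n, g n ^ q) ^ (1/q) := by
      refine h1.trans ?_
      gcongr <;> [exact ENNReal.sum_le_tsum t; exact ENNReal.sum_le_tsum t]
    calc ∑ n ∈ t, (f n + g n) ^ q
        = ((∑ n ∈ t, (f n + g n) ^ q) ^ (1/q)) ^ q := by
          rw [← ENNReal.rpow_mul, one_div_mul_cancel hq0.ne', ENNReal.rpow_one]
      _ ≤ _ := ENNReal.rpow_le_rpow h2 hq0.le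
  rw [ENNReal.tsum_eq_iSup_sum]
  rw [rpow_iSup (by positivity : (0:ℝ) < 1/q)]
  refine iSup_le fun t => ?_
  calc (∑ n ∈ t, (f n + g n) ^ q) ^ (1/q)
      ≤ (((∑' n, f n ^ q) ^ (1/q) + (∑' n, g n ^ q) ^ (1/q)) ^ q) ^ (1/q) :=
        ENNReal.rpow_le_rpow (key t) (by positivity)
    _ = _ := by rw [← ENNReal.rpow_mul, mul_one_div_cancel hq0.ne', ENNReal.rpow_one]

lemma minkowski_finset (hq : 1 ≤ q) (F : ℕ → ℕ → ℝ≥0∞) (s : Finset ℕ) :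
    (∑' n, (∑ k ∈ s, F k n) ^ q) ^ (1/q) ≤ ∑ k ∈ s, (∑' n, F k n ^ q) ^ (1/q) := by
  classical
  induction s using Finset.induction with
  | empty =>
    simp [ENNReal.zero_rpow_of_pos (lt_of_lt_of_le zero_lt_one hq),
      lt_of_lt_of_le zero_lt_one hq]
  | insert a s' hk ih =>
    rw [Finset.sum_insert hk]
    simp_rw [Finset.sum_insert hk]
    exact (minkowski_tsum_two hq _ _).trans (add_le_add le_rfl ih)

lemma minkowski_tsum (hq : 1 ≤ q) (F : ℕ → ℕ → ℝ≥0∞) :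
    (∑' n, (∑' k, F k n) ^ q) ^ (1/q) ≤ ∑' k, (∑' n, F k n ^ q) ^ (1/q) := by
  have hq0 : (0:ℝ) < q := lt_of_lt_of_le zero_lt_one hq
  have e1 : ∀ n, (∑' k, F k n) = ⨆ s : Finset ℕ, ∑ k ∈ s, F k n :=
    fun n => ENNReal.tsum_eq_iSup_sum
  have e2 : (∑' n, (∑' k, F k n) ^ q) =
      ⨆ s : Finset ℕ, ∑' n, (∑ k ∈ s, F k n) ^ q := by
    simp_rw [e1]
    simp_rw [rpow_iSup hq0]
    rw [← lintegral_count]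
    have hmono : Monotone (fun s : Finset ℕ => fun n => (∑ k ∈ s, F k n) ^ q) :=
      fun s t hst => fun n =>
        ENNReal.rpow_le_rpow (Finset.sum_le_sum_of_subset hst) hq0.le
    rw [lintegral_iSup_directed (fun s => (measurable_from_nat).aemeasurable)
      hmono.directed_le]
    simp_rw [lintegral_count]
  rw [e2, rpow_iSup (by positivity : (0:ℝ) < 1/q)]
  refine iSup_le fun s => ?_
  exact (minkowski_finset hq F s).trans (ENNReal.sum_le_tsum s)

end helpers



lemma FT1_expand (μ : Measure ℝ) [IsFiniteMeasure μ] (f : ℝ → ℂ) (hf : Integrable f μ)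
    (M : ℝ) (hM : 0 ≤ M) (hxM : ∀ᵐ x ∂μ, |x| ≤ M) (l w : ℝ) :
    FT1 μ f w = ∑' k : ℕ,
      ((((2 * Real.pi * (l - w) : ℝ) : ℂ) * Complex.I) ^ k / (Nat.factorial k : ℂ)) *
        FT1 μ (fun x => (x:ℂ) ^ k * f x) l := by
  set c : ℕ → ℂ := fun k => (((2 * Real.pi * (l - w) : ℝ) : ℂ) * Complex.I) ^ k / (Nat.factorial k : ℂ)
    with hc
  set F : ℕ → ℝ → ℂ := fun k x =>
    c k * (((x:ℂ) ^ k * f x) * Complex.exp (-(2 * Real.pi * l * x : ℝ) * Complex.I)) with hF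
  have hser : ∀ z : ℂ, Complex.exp z = ∑' k : ℕ, z ^ k / (Nat.factorial k : ℂ) := by
    intro z
    rw [Complex.exp_eq_exp_ℂ, NormedSpace.exp_eq_tsum_div]
  have hpt : ∀ x : ℝ,
      f x * Complex.exp (-(2 * Real.pi * w * x : ℝ) * Complex.I) = ∑' k, F k x := by
    intro x
    have hexp : Complex.exp (-(2 * Real.pi * w * x : ℝ) * Complex.I) =
        Complex.exp (-(2 * Real.pi * l * x : ℝ) * Complex.I) *
          Complex.exp (((2 * Real.pi * (l - w) * x : ℝ) : ℂ) * Complex.I) := by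
      rw [← Complex.exp_add]; congr 1; push_cast; ring
    rw [hexp, hser (((2 * Real.pi * (l - w) * x : ℝ) : ℂ) * Complex.I), ← mul_assoc]
    rw [show (f x * Complex.exp (-(2 * Real.pi * l * x : ℝ) * Complex.I)) *
        ∑' k : ℕ, (((2 * Real.pi * (l - w) * x : ℝ) : ℂ) * Complex.I) ^ k /
          (Nat.factorial k : ℂ) =
        ∑' k : ℕ, (f x * Complex.exp (-(2 * Real.pi * l * x : ℝ) * Complex.I)) *
          ((((2 * Real.pi * (l - w) * x : ℝ) : ℂ) * Complex.I) ^ k / (Nat.factorial k : ℂ))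
      from tsum_mul_left.symm]
    refine tsum_congr fun k => ?_
    have hpow : (((2 * Real.pi * (l - w) * x : ℝ) : ℂ) * Complex.I) ^ k =
        (((2 * Real.pi * (l - w) : ℝ) : ℂ) * Complex.I) ^ k * (x:ℂ) ^ k := by
      rw [← mul_pow]; congr 1; push_cast; ring
    simp only [hF, hc]
    rw [hpow]
    ring
  have hnormc : ∀ k, ‖c k‖ = (2 * Real.pi * |l - w|) ^ k / (Nat.factorial k : ℝ) := by
    intro k
    simp only [hc]
    rw [norm_div, norm_pow, norm_mul, Complex.norm_real, Complex.norm_I, mul_one,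
      Complex.norm_natCast]
    rw [Real.norm_eq_abs, abs_mul, _root_.abs_of_nonneg (by positivity : (0:ℝ) ≤ 2 * Real.pi)]
  have hnormE : ∀ (t x : ℝ), ‖Complex.exp (-(2 * Real.pi * t * x : ℝ) * Complex.I)‖ = 1 := by
    intro t x
    rw [Complex.norm_exp]
    simp
  set K : ℝ := 2 * Real.pi * |l - w| * M with hK
  have hK0 : 0 ≤ K := by positivity
  have hmeas : ∀ k, AEStronglyMeasurable (F k) μ := by
    intro k
    have hcont1 : Continuous fun x : ℝ => (x:ℂ) ^ k := by fun_prop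
    have hcont2 : Continuous fun x : ℝ =>
        Complex.exp (-(2 * Real.pi * l * x : ℝ) * Complex.I) := by fun_prop
    exact ((hcont1.aestronglyMeasurable.mul hf.1).mul hcont2.aestronglyMeasurable).const_mul _
  have hb : ∀ k, ∫⁻ x, ‖F k x‖₊ ∂μ ≤
      ENNReal.ofReal (K ^ k / (Nat.factorial k : ℝ)) * ∫⁻ x, ‖f x‖₊ ∂μ := by
    intro k
    rw [← lintegral_const_mul' _ _ ENNReal.ofReal_ne_top]
    refine lintegral_mono_ae ?_
    filter_upwards [hxM] with x hx
    have hreal : ‖F k x‖ ≤ K ^ k / (Nat.factorial k : ℝ) * ‖f x‖ := by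
      simp only [hF]
      rw [norm_mul, hnormc, norm_mul, norm_mul, hnormE, mul_one, norm_pow,
        Complex.norm_real, Real.norm_eq_abs]
      have h1 : |x| ^ k ≤ M ^ k := pow_le_pow_left₀ (abs_nonneg x) hx k
      have : (2 * Real.pi * |l - w|) ^ k / (Nat.factorial k : ℝ) * (|x| ^ k * ‖f x‖) ≤
          (2 * Real.pi * |l - w|) ^ k / (Nat.factorial k : ℝ) * (M ^ k * ‖f x‖) := by
        gcongr
      refine this.trans (le_of_eq ?_)
      rw [hK]
      rw [mul_pow]
      field_simp
      ring
    calc (‖F k x‖₊ : ℝ≥0∞) = ENNReal.ofReal ‖F k x‖ := (ofReal_norm _).symm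
      _ ≤ ENNReal.ofReal (K ^ k / (Nat.factorial k : ℝ) * ‖f x‖) := ENNReal.ofReal_le_ofReal hreal
      _ = ENNReal.ofReal (K ^ k / (Nat.factorial k : ℝ)) * ENNReal.ofReal ‖f x‖ :=
          ENNReal.ofReal_mul (by positivity)
      _ = ENNReal.ofReal (K ^ k / (Nat.factorial k : ℝ)) * ‖f x‖₊ := by rw [ofReal_norm]; rfl
  have hsum : (∑' k : ℕ, ∫⁻ x, ‖F k x‖₊ ∂μ) ≠ ⊤ := by
    refine ne_top_of_le_ne_top ?_ (ENNReal.tsum_le_tsum hb)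
    rw [ENNReal.tsum_mul_right]
    have he : (∑' k : ℕ, ENNReal.ofReal (K ^ k / (Nat.factorial k : ℝ))) = ENNReal.ofReal (Real.exp K) := by
      rw [← ENNReal.ofReal_tsum_of_nonneg (fun k => by positivity)
        (Real.summable_pow_div_factorial K)]
      congr 1
      rw [Real.exp_eq_exp_ℝ, NormedSpace.exp_eq_tsum_div]
    rw [he]
    exact ENNReal.mul_ne_top ENNReal.ofReal_ne_top hf.2.ne
  have hswap : FT1 μ f w = ∑' k, ∫ x, F k x ∂μ := by
    rw [FT1]
    rw [integral_congr_ae (Eventually.of_forall hpt)]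
    exact integral_tsum hmeas hsum
  rw [hswap]
  refine tsum_congr fun k => ?_
  simp only [hF]
  rw [integral_const_mul]
  rfl


lemma enn_norm_tsum_le (f : ℕ → ℂ) : (‖∑' k, f k‖₊ : ℝ≥0∞) ≤ ∑' k, (‖f k‖₊ : ℝ≥0∞) := by
  by_cases h : ∑' k, (‖f k‖₊ : ℝ≥0∞) = ⊤
  · simp [h]
  · have hs : Summable fun k => ‖f k‖₊ := ENNReal.tsum_coe_ne_top_iff_summable.mp h
    rw [← ENNReal.coe_tsum hs]
    exact_mod_cast nnnorm_tsum_le hs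

lemma tsum_shift_exp (x : ℝ) (hx : 0 ≤ x) :
    (∑' k : ℕ, ENNReal.ofReal (x ^ (k+1) / (Nat.factorial (k+1) : ℝ))) =
      ENNReal.ofReal (Real.exp x - 1) := by
  have hsummable : Summable (fun k : ℕ => x ^ (k+1) / (Nat.factorial (k+1) : ℝ)) := by
    have := (summable_nat_add_iff 1).mpr (Real.summable_pow_div_factorial x)
    simpa using this
  rw [← ENNReal.ofReal_tsum_of_nonneg (fun k => by positivity) hsummable]
  congr 1
  have hexp : Real.exp x = ∑' k : ℕ, x ^ k / (Nat.factorial k : ℝ) := by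
    rw [Real.exp_eq_exp_ℝ, NormedSpace.exp_eq_tsum_div]
  have hsplit := Summable.tsum_eq_zero_add (Real.summable_pow_div_factorial x)
  rw [hexp, hsplit]
  simp

lemma memLp_g (μ : Measure ℝ) (f : ℝ → ℂ) (P : ℝ≥0∞) (hf : MemLp f P μ)
    (M : ℝ) (hM : 0 ≤ M) (hxM : ∀ᵐ x ∂μ, |x| ≤ M) (k : ℕ) :
    MemLp (fun x : ℝ => (x:ℂ) ^ k * f x) P μ ∧
      eLpNorm (fun x : ℝ => (x:ℂ) ^ k * f x) P μ ≤ ENNReal.ofReal (M ^ k) * eLpNorm f P μ := by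
  have hae : AEStronglyMeasurable (fun x : ℝ => (x:ℂ) ^ k * f x) μ :=
    ((Complex.continuous_ofReal.pow k).aestronglyMeasurable).mul hf.1
  have hbound : ∀ᵐ x ∂μ, ‖((x:ℝ):ℂ) ^ k * f x‖ ≤ M ^ k * ‖f x‖ := by
    filter_upwards [hxM] with x hx
    rw [norm_mul, norm_pow, Complex.norm_real, Real.norm_eq_abs]
    gcongr
  constructor
  · exact hf.of_le_mul hae hbound
  · have h1 : eLpNorm (fun x : ℝ => (x:ℂ) ^ k * f x) P μ ≤
        eLpNorm (fun x : ℝ => (M ^ k : ℝ) • f x) P μ := by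
      refine eLpNorm_mono_ae ?_
      filter_upwards [hbound] with x hx
      rw [norm_smul, Real.norm_eq_abs, _root_.abs_of_nonneg (by positivity : (0:ℝ) ≤ M ^ k)]
      exact hx
    have h2 : eLpNorm (fun x : ℝ => (M ^ k : ℝ) • f x) P μ =
        (‖(M ^ k : ℝ)‖₊ : ℝ≥0∞) * eLpNorm f P μ := by
      have h3 := eLpNorm_const_smul (𝕜 := ℝ) (M ^ k : ℝ) f P μ
      rw [show ((M ^ k : ℝ) • f) = fun x : ℝ => (M ^ k : ℝ) • f x from rfl] at h3
      rw [h3]; rfl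
    refine h1.trans ?_
    rw [h2, ← Real.enorm_eq_ofReal (by positivity)]; exact le_rfl

lemma tail_sum (p q C M2 : ℝ) (hp : 1 < p) (hq : 1 < q) (hpq : 1/p + 1/q = 1)
    (hC : 0 < C) (hM2 : 0 < M2) :
    (∑' k : ℕ, ENNReal.ofReal ((C * M2) ^ (k+1) / (Nat.factorial (k+1) : ℝ))) ≤
      (ENNReal.ofReal (Real.exp (C ^ p) - 1)) ^ (1/p) *
        (ENNReal.ofReal (Real.exp (M2 ^ q) - 1)) ^ (1/q) := by
  have hp0 : (0:ℝ) < p := lt_trans zero_lt_one hp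
  have hq0 : (0:ℝ) < q := lt_trans zero_lt_one hq
  have hcon : p.HolderConjugate q := ⟨by simpa [one_div] using hpq, hp0, hq0⟩
  set u : ℕ → ℝ≥0∞ :=
    fun k => ENNReal.ofReal (C ^ (k+1) / ((Nat.factorial (k+1) : ℝ)) ^ (1/p)) with hu
  set v : ℕ → ℝ≥0∞ :=
    fun k => ENNReal.ofReal (M2 ^ (k+1) / ((Nat.factorial (k+1) : ℝ)) ^ (1/q)) with hv
  have hfacpos : ∀ k : ℕ, (0:ℝ) < (Nat.factorial (k+1) : ℝ) := fun k => by
    exact_mod_cast Nat.factorial_pos (k+1)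
  have huv : ∀ k, ENNReal.ofReal ((C * M2) ^ (k+1) / (Nat.factorial (k+1) : ℝ)) =
      u k * v k := by
    intro k
    rw [hu, hv, ← ENNReal.ofReal_mul (by positivity)]
    congr 1
    rw [div_mul_div_comm, ← mul_pow, ← Real.rpow_add (hfacpos k), hpq, Real.rpow_one]
  have hup : ∀ k, u k ^ p = ENNReal.ofReal ((C ^ p) ^ (k+1) / (Nat.factorial (k+1) : ℝ)) := by
    intro k
    rw [hu, ENNReal.ofReal_rpow_of_nonneg (by positivity) hp0.le]
    congr 1
    rw [Real.div_rpow (by positivity) (by positivity)]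
    congr 1
    · rw [← Real.rpow_natCast C (k+1), ← Real.rpow_natCast (C ^ p) (k+1),
        ← Real.rpow_mul hC.le, ← Real.rpow_mul hC.le]
      ring_nf
    · rw [← Real.rpow_mul (hfacpos k).le, one_div_mul_cancel hp0.ne', Real.rpow_one]
  have hvq : ∀ k, v k ^ q = ENNReal.ofReal ((M2 ^ q) ^ (k+1) / (Nat.factorial (k+1) : ℝ)) := by
    intro k
    rw [hv, ENNReal.ofReal_rpow_of_nonneg (by positivity) hq0.le]
    congr 1
    rw [Real.div_rpow (by positivity) (by positivity)]
    congr 1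
    · rw [← Real.rpow_natCast M2 (k+1), ← Real.rpow_natCast (M2 ^ q) (k+1),
        ← Real.rpow_mul hM2.le, ← Real.rpow_mul hM2.le]
      ring_nf
    · rw [← Real.rpow_mul (hfacpos k).le, one_div_mul_cancel hq0.ne', Real.rpow_one]
  calc (∑' k : ℕ, ENNReal.ofReal ((C * M2) ^ (k+1) / (Nat.factorial (k+1) : ℝ)))
      = ∑' k, u k * v k := tsum_congr huv
    _ ≤ (∑' k, u k ^ p) ^ (1/p) * (∑' k, v k ^ q) ^ (1/q) := holder_tsum hcon u v
    _ = _ := by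
        rw [tsum_congr hup, tsum_congr hvq,
          tsum_shift_exp _ (Real.rpow_nonneg hC.le p), tsum_shift_exp _ (Real.rpow_nonneg hM2.le q)]


/-- Stability of `q`-Bessel families of exponentials under perturbation of frequencies:
if `|λ_n − ω_n| ≤ C` and `{e_{λ_n}}` is a `q`-Bessel for `L^p(μ)` with bound `B`
(`μ` a probability measure supported in `[-M,M]`), then `{e_{ω_n}}` is a `q`-Bessel with bound
`(B^{1/q} + (B (e^{C^p}−1)^{q−1} (e^{(2πM)^q}−1))^{1/q})^q`. -/
theorem stmt6 (p q : ℝ) (hp : 1 < p) (hq : 1 < q) (hpq : 1 / p + 1 / q = 1)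
    (μ : Measure ℝ) [IsProbabilityMeasure μ] (M : ℝ) (hM : 0 < M)
    (hsupp : μ (Set.Icc (-M) M)ᶜ = 0)
    (lam ω : ℕ → ℝ) (C : ℝ) (hC : 0 < C) (hclose : ∀ n, |lam n - ω n| ≤ C)
    (B : ℝ) (hB : 0 < B)
    (hBessel : ∀ f : ℝ → ℂ, MemLp f (ENNReal.ofReal p) μ →
      ∑' n : ℕ, (‖FT1 μ f (lam n)‖₊ : ℝ≥0∞) ^ q ≤
        ENNReal.ofReal B * (eLpNorm f (ENNReal.ofReal p) μ) ^ q) :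
    ∀ f : ℝ → ℂ, MemLp f (ENNReal.ofReal p) μ →
      ∑' n : ℕ, (‖FT1 μ f (ω n)‖₊ : ℝ≥0∞) ^ q ≤
        ENNReal.ofReal
          ((B ^ (1 / q) +
              (B * (Real.exp (C ^ p) - 1) ^ (q - 1) *
                (Real.exp ((2 * Real.pi * M) ^ q) - 1)) ^ (1 / q)) ^ q) *
          (eLpNorm f (ENNReal.ofReal p) μ) ^ q := by
  intro f hf
  have hp0 : (0:ℝ) < p := lt_trans zero_lt_one hp
  have hq0 : (0:ℝ) < q := lt_trans zero_lt_one hq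
  have h1q : (0:ℝ) < 1/q := by positivity
  set P : ℝ≥0∞ := ENNReal.ofReal p with hP
  have hP1 : 1 ≤ P := by
    rw [hP, ← ENNReal.ofReal_one]
    exact ENNReal.ofReal_le_ofReal hp.le
  have hxM : ∀ᵐ x ∂μ, |x| ≤ M := by
    rw [ae_iff]
    refine measure_mono_null (fun x hx => ?_) hsupp
    simp only [Set.mem_setOf_eq] at hx
    simp only [Set.mem_compl_iff, Set.mem_Icc]
    exact fun h => hx (abs_le.mpr ⟨h.1, h.2⟩)
  have hint : Integrable f μ := hf.integrable hP1
  have hgmem : ∀ k : ℕ, MemLp (fun x : ℝ => (x:ℂ) ^ k * f x) P μ :=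
    fun k => (memLp_g μ f P hf M hM.le hxM k).1
  have hgnorm : ∀ k : ℕ, eLpNorm (fun x : ℝ => (x:ℂ) ^ k * f x) P μ ≤
      ENNReal.ofReal (M ^ k) * eLpNorm f P μ :=
    fun k => (memLp_g μ f P hf M hM.le hxM k).2
  set SN : ℝ≥0∞ := eLpNorm f P μ with hSN
  set A : ℕ → ℝ≥0∞ :=
    fun k => ENNReal.ofReal ((2*Real.pi*C) ^ k / (Nat.factorial k : ℝ)) with hA
  set E : ℕ → ℕ → ℝ≥0∞ :=
    fun k n => A k * (‖FT1 μ (fun x : ℝ => (x:ℂ) ^ k * f x) (lam n)‖₊ : ℝ≥0∞) with hE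
  have hbound : ∀ n, (‖FT1 μ f (ω n)‖₊ : ℝ≥0∞) ≤ ∑' k, E k n := by
    intro n
    rw [FT1_expand μ f hint M hM.le hxM (lam n) (ω n)]
    refine (enn_norm_tsum_le _).trans (ENNReal.tsum_le_tsum fun k => ?_)
    rw [nnnorm_mul, ENNReal.coe_mul]
    refine mul_le_mul_left ?_ _
    change ‖(_ : ℂ)‖ₑ ≤ _
    rw [← ofReal_norm]
    refine ENNReal.ofReal_le_ofReal ?_
    rw [norm_div, norm_pow, norm_mul, Complex.norm_real, Complex.norm_I, mul_one,
      Complex.norm_natCast, Real.norm_eq_abs]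
    have habs : |2*Real.pi*(lam n - ω n)| ≤ 2*Real.pi*C := by
      rw [abs_mul, _root_.abs_of_nonneg (by positivity : (0:ℝ) ≤ 2*Real.pi)]
      exact mul_le_mul_of_nonneg_left (hclose n) (by positivity)
    gcongr
  set N : ℕ → ℝ≥0∞ := fun k =>
    (∑' n, (‖FT1 μ (fun x : ℝ => (x:ℂ) ^ k * f x) (lam n)‖₊ : ℝ≥0∞) ^ q) ^ (1/q) with hN
  have hNk : ∀ k, N k ≤ (ENNReal.ofReal B) ^ (1/q) * (ENNReal.ofReal (M ^ k) * SN) := by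
    intro k
    have h1 := hBessel _ (hgmem k)
    have h2 : N k ≤
        (ENNReal.ofReal B * (eLpNorm (fun x : ℝ => (x:ℂ) ^ k * f x) P μ) ^ q) ^ (1/q) :=
      ENNReal.rpow_le_rpow h1 h1q.le
    refine h2.trans ?_
    rw [ENNReal.mul_rpow_of_nonneg _ _ h1q.le, ← ENNReal.rpow_mul,
      mul_one_div_cancel hq0.ne', ENNReal.rpow_one]
    exact mul_le_mul_right (hgnorm k) _
  have hT : (∑' n, (‖FT1 μ f (ω n)‖₊ : ℝ≥0∞) ^ q) ^ (1/q) ≤ ∑' k, A k * N k := by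
    have step1 : (∑' n, (‖FT1 μ f (ω n)‖₊ : ℝ≥0∞) ^ q) ^ (1/q) ≤
        (∑' n, (∑' k, E k n) ^ q) ^ (1/q) :=
      ENNReal.rpow_le_rpow
        (ENNReal.tsum_le_tsum fun n => ENNReal.rpow_le_rpow (hbound n) hq0.le) h1q.le
    refine step1.trans ((minkowski_tsum hq.le E).trans (le_of_eq (tsum_congr fun k => ?_)))
    simp only [hE]
    rw [show (∑' n, (A k * (‖FT1 μ (fun x : ℝ => (x:ℂ) ^ k * f x) (lam n)‖₊ : ℝ≥0∞)) ^ q)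
        = A k ^ q * ∑' n, (‖FT1 μ (fun x : ℝ => (x:ℂ) ^ k * f x) (lam n)‖₊ : ℝ≥0∞) ^ q from by
      rw [← ENNReal.tsum_mul_left]
      exact tsum_congr fun n => ENNReal.mul_rpow_of_nonneg _ _ hq0.le]
    rw [ENNReal.mul_rpow_of_nonneg _ _ h1q.le, ← ENNReal.rpow_mul,
      mul_one_div_cancel hq0.ne', ENNReal.rpow_one]
  have hAk : ∀ k : ℕ, A k * ENNReal.ofReal (M ^ k) =
      ENNReal.ofReal ((2*Real.pi*C*M) ^ k / (Nat.factorial k : ℝ)) := by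
    intro k
    rw [hA, ← ENNReal.ofReal_mul (by positivity)]
    congr 1
    rw [div_mul_eq_mul_div, ← mul_pow]
  have hsum2 : (∑' k, A k * N k) ≤
      (ENNReal.ofReal B) ^ (1/q) * SN *
        ∑' k : ℕ, ENNReal.ofReal ((2*Real.pi*C*M) ^ k / (Nat.factorial k : ℝ)) := by
    rw [← ENNReal.tsum_mul_left]
    refine ENNReal.tsum_le_tsum fun k => ?_
    calc A k * N k
        ≤ A k * ((ENNReal.ofReal B) ^ (1/q) * (ENNReal.ofReal (M ^ k) * SN)) :=
          mul_le_mul_right (hNk k) _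
      _ = (ENNReal.ofReal B) ^ (1/q) * SN * (A k * ENNReal.ofReal (M ^ k)) := by ring
      _ = _ := by rw [hAk k]
  have hsplit : (∑' k : ℕ, ENNReal.ofReal ((2*Real.pi*C*M) ^ k / (Nat.factorial k : ℝ))) =
      1 + ∑' k : ℕ, ENNReal.ofReal ((2*Real.pi*C*M) ^ (k+1) / (Nat.factorial (k+1) : ℝ)) := by
    rw [tsum_eq_zero_add' (f := fun k : ℕ =>
      ENNReal.ofReal ((2*Real.pi*C*M) ^ k / (Nat.factorial k : ℝ))) ENNReal.summable]
    simp
  have htail :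
      (∑' k : ℕ, ENNReal.ofReal ((2*Real.pi*C*M) ^ (k+1) / (Nat.factorial (k+1) : ℝ))) ≤
      (ENNReal.ofReal (Real.exp (C ^ p) - 1)) ^ (1/p) *
        (ENNReal.ofReal (Real.exp ((2*Real.pi*M) ^ q) - 1)) ^ (1/q) := by
    have h := tail_sum p q C (2*Real.pi*M) hp hq hpq hC (by positivity)
    rw [show C * (2*Real.pi*M) = 2*Real.pi*C*M by ring] at h
    exact h
  set X := ENNReal.ofReal (Real.exp (C ^ p) - 1) with hX
  set Y := ENNReal.ofReal (Real.exp ((2*Real.pi*M) ^ q) - 1) with hY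
  set D := (ENNReal.ofReal B) ^ (1/q) with hD
  have hTK : (∑' n, (‖FT1 μ f (ω n)‖₊ : ℝ≥0∞) ^ q) ^ (1/q) ≤
      (D + D * (X ^ (1/p) * Y ^ (1/q))) * SN := by
    refine hT.trans (hsum2.trans ?_)
    calc D * SN * ∑' k : ℕ, ENNReal.ofReal ((2*Real.pi*C*M) ^ k / (Nat.factorial k : ℝ))
        ≤ D * SN * (1 + X ^ (1/p) * Y ^ (1/q)) := by
          rw [hsplit]
          exact mul_le_mul_right (add_le_add le_rfl htail) _
      _ = (D + D * (X ^ (1/p) * Y ^ (1/q))) * SN := by ring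
  have hx0 : (0:ℝ) ≤ Real.exp (C ^ p) - 1 := by
    have h := Real.one_le_exp (Real.rpow_nonneg hC.le p)
    linarith
  have hy0 : (0:ℝ) ≤ Real.exp ((2*Real.pi*M) ^ q) - 1 := by
    have h := Real.one_le_exp (Real.rpow_nonneg (by positivity : (0:ℝ) ≤ 2*Real.pi*M) q)
    linarith
  have hqp : (q - 1) * (1/q) = 1/p := by
    have h1 : 1/p = 1 - 1/q := by linarith
    rw [h1]
    field_simp
  have hconst : D + D * (X ^ (1/p) * Y ^ (1/q)) =
      ENNReal.ofReal (B ^ (1/q) +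
        (B * (Real.exp (C ^ p) - 1) ^ (q - 1) *
          (Real.exp ((2*Real.pi*M) ^ q) - 1)) ^ (1/q)) := by
    have hDof : D = ENNReal.ofReal (B ^ (1/q)) := by
      rw [hD, ENNReal.ofReal_rpow_of_nonneg hB.le h1q.le]
    have hXof : X ^ (1/p) = ENNReal.ofReal ((Real.exp (C ^ p) - 1) ^ (1/p)) := by
      rw [hX, ENNReal.ofReal_rpow_of_nonneg hx0 (by positivity)]
    have hYof : Y ^ (1/q) = ENNReal.ofReal ((Real.exp ((2*Real.pi*M) ^ q) - 1) ^ (1/q)) := by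
      rw [hY, ENNReal.ofReal_rpow_of_nonneg hy0 h1q.le]
    rw [hDof, hXof, hYof,
      ← ENNReal.ofReal_mul (Real.rpow_nonneg hx0 _),
      ← ENNReal.ofReal_mul (Real.rpow_nonneg hB.le _),
      ← ENNReal.ofReal_add (Real.rpow_nonneg hB.le _)
        (mul_nonneg (Real.rpow_nonneg hB.le _)
          (mul_nonneg (Real.rpow_nonneg hx0 _) (Real.rpow_nonneg hy0 _)))]
    congr 1
    rw [Real.mul_rpow (mul_nonneg hB.le (Real.rpow_nonneg hx0 _)) hy0,
      Real.mul_rpow hB.le (Real.rpow_nonneg hx0 _),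
      ← Real.rpow_mul hx0, hqp]
    ring
  have hW0 : (0:ℝ) ≤ B ^ (1/q) +
      (B * (Real.exp (C ^ p) - 1) ^ (q - 1) * (Real.exp ((2*Real.pi*M) ^ q) - 1)) ^ (1/q) :=
    add_nonneg (Real.rpow_nonneg hB.le _) (Real.rpow_nonneg
      (mul_nonneg (mul_nonneg hB.le (Real.rpow_nonneg hx0 _)) hy0) _)
  calc ∑' n : ℕ, (‖FT1 μ f (ω n)‖₊ : ℝ≥0∞) ^ q
      = (((∑' n : ℕ, (‖FT1 μ f (ω n)‖₊ : ℝ≥0∞) ^ q) ^ (1/q)) ^ q) := by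
        rw [← ENNReal.rpow_mul, one_div_mul_cancel hq0.ne', ENNReal.rpow_one]
    _ ≤ ((D + D * (X ^ (1/p) * Y ^ (1/q))) * SN) ^ q := ENNReal.rpow_le_rpow hTK hq0.le
    _ = (D + D * (X ^ (1/p) * Y ^ (1/q))) ^ q * SN ^ q :=
        ENNReal.mul_rpow_of_nonneg _ _ hq0.le
    _ = _ := by
        rw [hconst, ENNReal.ofReal_rpow_of_nonneg hW0 hq0.le]
end

section
/- Let 1<p,q<∞ with 1/p+1/q=1 and μ = χ_{[0,1]}dx + δ₂ on ℝ. Then for any constants B > A > 0, there is no (p,q)-frame measure ν for μ with bounds A, B; i.e., the set F_{A,B}(μ)_{p,q} is empty. -/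
open MeasureTheory Complex Filter
open scoped ENNReal NNReal Real

noncomputable def μ0 : Measure ℝ := volume.restrict (Set.Icc (0 : ℝ) 1) + Measure.dirac 2

instance : IsFiniteMeasure μ0 := by
  constructor
  simp [μ0, Real.volume_Icc]

lemma measurable_ker (f : ℝ → ℂ) (hf : Measurable f) (t : ℝ) :
    Measurable (fun x => f x * Complex.exp (-(2 * Real.pi * t * x : ℝ) * Complex.I)) := by
  fun_prop

lemma unit_norm (r : ℝ) : ‖Complex.exp (-(r:ℝ) * Complex.I)‖ = 1 := by
  rw [show ((-(r:ℝ):ℂ) * Complex.I) = (((-r:ℝ):ℂ) * Complex.I) by push_cast; ring,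
    Complex.norm_exp_ofReal_mul_I]

noncomputable def f1 : ℝ → ℂ := Set.indicator {(2:ℝ)} (fun _ => 1)

lemma f1_meas : Measurable f1 :=
  Measurable.indicator measurable_const (measurableSet_singleton 2)

lemma FT1_f1 (t : ℝ) : FT1 μ0 f1 t = Complex.exp (-(2 * Real.pi * t * 2 : ℝ) * Complex.I) := by
  have hm := measurable_ker f1 f1_meas t
  rw [FT1, μ0, integral_add_measure]
  · rw [integral_dirac]
    have h0 : ∀ᵐ x ∂(volume.restrict (Set.Icc (0:ℝ) 1)),
        f1 x * Complex.exp (-(2 * Real.pi * t * x : ℝ) * Complex.I) = 0 := by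
      filter_upwards [ae_restrict_mem measurableSet_Icc] with x hx
      have hx2 : x ∉ ({(2:ℝ)} : Set ℝ) := by
        simp only [Set.mem_singleton_iff]
        rintro rfl
        exact absurd hx.2 (by norm_num)
      simp [f1, Set.indicator_of_notMem hx2]
    rw [integral_congr_ae h0]
    simp [f1]
  · apply Integrable.mono' (integrable_const (1:ℝ)) hm.aestronglyMeasurable
    filter_upwards with x
    rw [norm_mul, unit_norm, mul_one]
    simp only [f1, Set.indicator_apply]
    split <;> simp
  · apply Integrable.mono' (integrable_const (1:ℝ)) hm.aestronglyMeasurable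
    filter_upwards with x
    rw [norm_mul, unit_norm, mul_one]
    simp only [f1, Set.indicator_apply]
    split <;> simp

lemma eLpNorm_f1 (r : ℝ) (hr : 0 < r) :
    eLpNorm f1 (ENNReal.ofReal r) μ0 = 1 := by
  rw [eLpNorm_eq_lintegral_rpow_enorm_toReal (by simp [hr]) (by simp), μ0, lintegral_add_measure]
  simp only [enorm_eq_nnnorm]
  have h1 : ∫⁻ x in Set.Icc (0:ℝ) 1, (‖f1 x‖₊ : ℝ≥0∞) ^ (ENNReal.ofReal r).toReal = 0 := by
    rw [lintegral_eq_zero_iff (f := fun x => (‖f1 x‖₊ : ℝ≥0∞) ^ (ENNReal.ofReal r).toReal)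
      (f1_meas.enorm.pow_const _)]
    filter_upwards [ae_restrict_mem measurableSet_Icc] with x hx
    have hx2 : x ∉ ({(2:ℝ)} : Set ℝ) := by
      simp only [Set.mem_singleton_iff]
      rintro rfl
      exact absurd hx.2 (by norm_num)
    simp [f1, Set.indicator_of_notMem hx2, ENNReal.zero_rpow_of_pos,
      ENNReal.toReal_ofReal hr.le, hr]
  rw [h1, lintegral_dirac]
  simp [f1]

noncomputable def gfun (T : ℝ) : ℝ → ℂ :=
  Set.indicator (Set.Icc (0:ℝ) 1) (fun x => Complex.exp (-(2 * Real.pi * T * x : ℝ) * Complex.I))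

lemma gfun_meas (T : ℝ) : Measurable (gfun T) :=
  Measurable.indicator (by fun_prop) measurableSet_Icc

lemma gfun_norm_le (T x : ℝ) : ‖gfun T x‖ ≤ 1 := by
  rw [gfun, Set.indicator_apply]
  split
  · rw [unit_norm]
  · simp

lemma eLpNorm_gfun (T : ℝ) (r : ℝ) (hr : 0 < r) :
    eLpNorm (gfun T) (ENNReal.ofReal r) μ0 = 1 := by
  rw [eLpNorm_eq_lintegral_rpow_enorm_toReal (by simp [hr]) (by simp), μ0, lintegral_add_measure]
  simp only [enorm_eq_nnnorm]
  have h1 : ∫⁻ x in Set.Icc (0:ℝ) 1, (‖gfun T x‖₊ : ℝ≥0∞) ^ (ENNReal.ofReal r).toReal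
      = ∫⁻ _ in Set.Icc (0:ℝ) 1, 1 := by
    apply lintegral_congr_ae
    filter_upwards [ae_restrict_mem measurableSet_Icc] with x hx
    have : ‖gfun T x‖ = 1 := by rw [gfun, Set.indicator_of_mem hx, unit_norm]
    have h2 : (‖gfun T x‖₊ : ℝ≥0∞) = 1 := by
      rw [← enorm_eq_nnnorm, ← ofReal_norm, this]; simp
    rw [h2, ENNReal.one_rpow]
  have h2 : gfun T 2 = 0 := by
    rw [gfun, Set.indicator_of_notMem]
    intro h; exact absurd h.2 (by norm_num)
  rw [h1, lintegral_dirac]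
  simp [h2, ENNReal.zero_rpow_of_pos, ENNReal.toReal_ofReal hr.le, hr, Real.volume_Icc]

noncomputable def K (s : ℝ) : ℂ :=
  ∫ x in Set.Icc (0:ℝ) 1, Complex.exp (-(2 * Real.pi * s * x : ℝ) * Complex.I)

lemma FT1_gfun (T t : ℝ) : FT1 μ0 (gfun T) t = K (T + t) := by
  have hm := measurable_ker (gfun T) (gfun_meas T) t
  rw [FT1, μ0, integral_add_measure]
  · rw [integral_dirac]
    have h2 : gfun T 2 = 0 := by
      rw [gfun, Set.indicator_of_notMem]
      intro h; exact absurd h.2 (by norm_num)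
    rw [h2, zero_mul, add_zero, K]
    apply integral_congr_ae
    filter_upwards [ae_restrict_mem measurableSet_Icc] with x hx
    rw [gfun, Set.indicator_of_mem hx, ← Complex.exp_add]
    congr 1
    push_cast
    ring
  · apply Integrable.mono' (integrable_const (1:ℝ)) hm.aestronglyMeasurable
    filter_upwards with x
    rw [norm_mul, unit_norm, mul_one]
    exact gfun_norm_le T x
  · apply Integrable.mono' (integrable_const (1:ℝ)) hm.aestronglyMeasurable
    filter_upwards with x
    rw [norm_mul, unit_norm, mul_one]
    exact gfun_norm_le T x

lemma K_norm_le_one (s : ℝ) : ‖K s‖ ≤ 1 := by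
  rw [K, integral_Icc_eq_integral_Ioc, ← intervalIntegral.integral_of_le (by norm_num : (0:ℝ) ≤ 1)]
  have := intervalIntegral.norm_integral_le_of_norm_le_const
    (C := 1) (f := fun x : ℝ => Complex.exp (-(2 * Real.pi * s * x : ℝ) * Complex.I))
    (a := 0) (b := 1) (fun x _ => by rw [unit_norm])
  simpa using this

lemma K_norm_le (s : ℝ) (hs : s ≠ 0) : ‖K s‖ ≤ 1 / (Real.pi * |s|) := by
  set c : ℂ := ((-(2 * Real.pi * s) : ℝ) : ℂ) * Complex.I with hcdef
  have hc : c ≠ 0 := by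
    simp [hcdef, Complex.ext_iff, Real.pi_ne_zero, hs]
  have hK : K s = (Complex.exp c - 1) / c := by
    have heq : ∫ x in (0:ℝ)..1, Complex.exp (-(2 * Real.pi * s * x : ℝ) * Complex.I)
        = ∫ x in (0:ℝ)..1, Complex.exp (c * x) :=
      intervalIntegral.integral_congr (fun x _ => by
        congr 1; rw [hcdef]; push_cast; ring)
    rw [K, integral_Icc_eq_integral_Ioc,
      ← intervalIntegral.integral_of_le (by norm_num : (0:ℝ) ≤ 1), heq,
      integral_exp_mul_complex hc]
    norm_num
  rw [hK, norm_div]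
  have h1 : ‖Complex.exp c‖ = 1 := by
    rw [hcdef, show (((-(2 * Real.pi * s) : ℝ) : ℂ)) = -((2 * Real.pi * s : ℝ) : ℂ) by
      push_cast; ring, unit_norm]
  have h3 : ‖c‖ = 2 * Real.pi * |s| := by
    rw [hcdef, norm_mul, Complex.norm_real, Complex.norm_I, mul_one,
      Real.norm_eq_abs, abs_neg, abs_mul, abs_of_pos (by positivity : (0:ℝ) < 2 * Real.pi)]
  rw [h3]
  have hpos : (0:ℝ) < 2 * Real.pi * |s| := by positivity
  rw [div_le_div_iff₀ hpos (by positivity)]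
  calc ‖Complex.exp c - 1‖ * (Real.pi * |s|) ≤ 2 * (Real.pi * |s|) := by
        apply mul_le_mul_of_nonneg_right _ (by positivity)
        calc _ ≤ ‖Complex.exp c‖ + ‖(1:ℂ)‖ := norm_sub_le _ _
          _ = 2 := by rw [h1, norm_one]; norm_num
    _ = 1 * (2 * Real.pi * |s|) := by ring

/-- For `μ = χ_{[0,1]}dx + δ₂` and any `B > A > 0`, there is no `(p,q)`-frame measure `ν`
for `μ` with bounds `A, B`: the set `F_{A,B}(μ)_{p,q}` is empty. -/
theorem stmt15 (p q : ℝ) (hp : 1 < p) (hq : 1 < q) (hpq : 1 / p + 1 / q = 1)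
    (A B : ℝ) (hA : 0 < A) (hAB : A < B) :
    ¬ ∃ ν : Measure ℝ,
      ∀ f : ℝ → ℂ,
        MemLp f (ENNReal.ofReal p) (volume.restrict (Set.Icc (0 : ℝ) 1) + Measure.dirac 2) →
        ENNReal.ofReal A *
            (eLpNorm f (ENNReal.ofReal p)
              (volume.restrict (Set.Icc (0 : ℝ) 1) + Measure.dirac 2)) ^ q ≤
          ∫⁻ t, (‖FT1 (volume.restrict (Set.Icc (0 : ℝ) 1) + Measure.dirac 2) f t‖₊ : ℝ≥0∞) ^ q
            ∂ν ∧
        ∫⁻ t, (‖FT1 (volume.restrict (Set.Icc (0 : ℝ) 1) + Measure.dirac 2) f t‖₊ : ℝ≥0∞) ^ q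
            ∂ν ≤
          ENNReal.ofReal B *
            (eLpNorm f (ENNReal.ofReal p)
              (volume.restrict (Set.Icc (0 : ℝ) 1) + Measure.dirac 2)) ^ q := by
  rintro ⟨ν, hν⟩
  have hB0 : (0:ℝ) < B := hA.trans hAB
  have hq0 : (0:ℝ) < q := lt_trans one_pos hq
  have hp0 : (0:ℝ) < p := lt_trans one_pos hp
  have hν' : ∀ f : ℝ → ℂ, MemLp f (ENNReal.ofReal p) μ0 →
      (ENNReal.ofReal A * (eLpNorm f (ENNReal.ofReal p) μ0) ^ q
          ≤ ∫⁻ t, (‖FT1 μ0 f t‖₊ : ℝ≥0∞) ^ q ∂ν ∧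
        ∫⁻ t, (‖FT1 μ0 f t‖₊ : ℝ≥0∞) ^ q ∂ν
          ≤ ENNReal.ofReal B * (eLpNorm f (ENNReal.ofReal p) μ0) ^ q) := hν
  -- Step 1: ν is finite with total mass at most B
  have hmem1 : MemLp f1 (ENNReal.ofReal p) μ0 :=
    ⟨f1_meas.aestronglyMeasurable, by rw [eLpNorm_f1 p hp0]; exact ENNReal.one_lt_top⟩
  have h1 := (hν' f1 hmem1).2
  rw [eLpNorm_f1 p hp0, ENNReal.one_rpow, mul_one] at h1
  have hFT1 : ∀ t : ℝ, (‖FT1 μ0 f1 t‖₊ : ℝ≥0∞) = 1 := by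
    intro t
    rw [← enorm_eq_nnnorm, ← ofReal_norm, FT1_f1, unit_norm, ENNReal.ofReal_one]
  have hνuniv : ν Set.univ ≤ ENNReal.ofReal B := by
    calc ν Set.univ = ∫⁻ t, (‖FT1 μ0 f1 t‖₊ : ℝ≥0∞) ^ q ∂ν := by
          rw [← lintegral_one]
          exact lintegral_congr fun t => by rw [hFT1 t, ENNReal.one_rpow]
      _ ≤ ENNReal.ofReal B := h1
  -- Step 2: choose the radius R
  set M : ℝ := (2 * B / A) ^ (1 / q) + 1 with hMdef
  have hM0 : 0 < M := by
    rw [hMdef]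
    have : (0:ℝ) ≤ (2 * B / A) ^ (1 / q) := Real.rpow_nonneg (by positivity) _
    linarith
  have hMq : 2 * B / A < M ^ q := by
    have h2 : ((2 * B / A) ^ (1 / q)) ^ q < M ^ q :=
      Real.rpow_lt_rpow (Real.rpow_nonneg (by positivity) _) (by simp [hMdef]) hq0
    calc 2 * B / A = (2 * B / A) ^ ((1 / q) * q) := by
          rw [one_div_mul_cancel hq0.ne', Real.rpow_one]
      _ = ((2 * B / A) ^ (1 / q)) ^ q := Real.rpow_mul (by positivity) _ _
      _ < M ^ q := h2
  set R : ℝ := M / Real.pi with hRdef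
  have hR0 : 0 < R := div_pos hM0 Real.pi_pos
  have hπR : Real.pi * R = M := by
    rw [hRdef]; field_simp
  have hkey : (1 / (Real.pi * R)) ^ q * B < A / 2 := by
    rw [hπR]
    have hMq0 : 0 < M ^ q := lt_trans (by positivity) hMq
    rw [one_div, Real.inv_rpow hM0.le, inv_mul_eq_div, div_lt_iff₀ hMq0]
    calc A / 2 * M ^ q > A / 2 * (2 * B / A) := by
          exact mul_lt_mul_of_pos_left hMq (by positivity)
      _ = B := by field_simp
  -- Step 3: find a translate with small ν-measure
  set I : ℕ → Set ℝ := fun n => Set.Ioo (-(2 * R * n) - R) (-(2 * R * n) + R) with hIdef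
  have hdisj : Pairwise (Function.onFun Disjoint I) := by
    intro m n hmn
    simp only [Function.onFun, hIdef]
    rw [Set.Ioo_disjoint_Ioo]
    rcases lt_or_gt_of_ne hmn with h | h
    · have hc : (m:ℝ) + 1 ≤ n := by exact_mod_cast h
      exact le_trans (min_le_right _ _) (le_trans (by nlinarith [hR0.le]) (le_max_left _ _))
    · have hc : (n:ℝ) + 1 ≤ m := by exact_mod_cast h
      exact le_trans (min_le_left _ _) (le_trans (by nlinarith [hR0.le]) (le_max_right _ _))
  have hsum : ν (⋃ n, I n) = ∑' n, ν (I n) :=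
    measure_iUnion hdisj fun n => measurableSet_Ioo
  have htsum : ∑' n, ν (I n) ≠ ∞ := by
    rw [← hsum]
    exact (lt_of_le_of_lt (measure_mono (Set.subset_univ _))
      (hνuniv.trans_lt ENNReal.ofReal_lt_top)).ne
  have htend := ENNReal.tendsto_atTop_zero_of_tsum_ne_top htsum
  have hhalf : (0:ℝ≥0∞) < ENNReal.ofReal (A / 2) := ENNReal.ofReal_pos.mpr (by linarith)
  obtain ⟨n, hn⟩ := (htend.eventually_lt_const hhalf).exists
  -- Step 4: test against the modulated indicator
  set T : ℝ := 2 * R * n with hTdef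
  have hmemg : MemLp (gfun T) (ENNReal.ofReal p) μ0 :=
    ⟨(gfun_meas T).aestronglyMeasurable, by rw [eLpNorm_gfun T p hp0]; exact ENNReal.one_lt_top⟩
  have h2 := (hν' (gfun T) hmemg).1
  rw [eLpNorm_gfun T p hp0, ENNReal.one_rpow, mul_one] at h2
  have hpt : ∀ t : ℝ, (‖FT1 μ0 (gfun T) t‖₊ : ℝ≥0∞) ^ q
      ≤ (I n).indicator (1 : ℝ → ℝ≥0∞) t + ENNReal.ofReal ((1 / (Real.pi * R)) ^ q) := by
    intro t
    rw [FT1_gfun]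
    by_cases ht : t ∈ I n
    · rw [Set.indicator_of_mem ht, Pi.one_apply]
      have hle : (‖K (T + t)‖₊ : ℝ≥0∞) ≤ 1 := by
        rw [← enorm_eq_nnnorm, ← ofReal_norm, ← ENNReal.ofReal_one]
        exact ENNReal.ofReal_le_ofReal (K_norm_le_one _)
      calc (‖K (T + t)‖₊ : ℝ≥0∞) ^ q ≤ 1 ^ q := ENNReal.rpow_le_rpow hle hq0.le
        _ = 1 := ENNReal.one_rpow q
        _ ≤ _ := le_self_add
    · rw [Set.indicator_of_notMem ht]
      have hs : R ≤ |T + t| := by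
        simp only [hIdef, Set.mem_Ioo, not_and_or, not_lt] at ht
        rw [le_abs]
        rcases ht with h | h
        · right; rw [hTdef]; linarith
        · left; rw [hTdef]; linarith
      have hs0 : T + t ≠ 0 := by
        intro h
        rw [h, abs_zero] at hs
        linarith
      have hle : ‖K (T + t)‖ ≤ 1 / (Real.pi * R) := by
        refine (K_norm_le _ hs0).trans ?_
        exact one_div_le_one_div_of_le (by positivity)
          (mul_le_mul_of_nonneg_left hs Real.pi_pos.le)
      calc (‖K (T + t)‖₊ : ℝ≥0∞) ^ q ≤ (ENNReal.ofReal (1 / (Real.pi * R))) ^ q := by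
            apply ENNReal.rpow_le_rpow _ hq0.le
            rw [← enorm_eq_nnnorm, ← ofReal_norm]
            exact ENNReal.ofReal_le_ofReal hle
        _ = ENNReal.ofReal ((1 / (Real.pi * R)) ^ q) :=
            ENNReal.ofReal_rpow_of_pos (by positivity)
        _ ≤ _ := le_add_self
  have hint : ∫⁻ t, (‖FT1 μ0 (gfun T) t‖₊ : ℝ≥0∞) ^ q ∂ν
      ≤ ν (I n) + ENNReal.ofReal ((1 / (Real.pi * R)) ^ q) * ν Set.univ := by
    calc ∫⁻ t, (‖FT1 μ0 (gfun T) t‖₊ : ℝ≥0∞) ^ q ∂ν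
        ≤ ∫⁻ t, ((I n).indicator (1 : ℝ → ℝ≥0∞) t
            + ENNReal.ofReal ((1 / (Real.pi * R)) ^ q)) ∂ν := lintegral_mono hpt
      _ = ν (I n) + ENNReal.ofReal ((1 / (Real.pi * R)) ^ q) * ν Set.univ := by
          have hIm : MeasurableSet (I n) := measurableSet_Ioo
          rw [lintegral_add_left (measurable_one.indicator hIm),
            lintegral_indicator_one hIm, lintegral_const]
  have hlt : ν (I n) + ENNReal.ofReal ((1 / (Real.pi * R)) ^ q) * ν Set.univ
      < ENNReal.ofReal A := by
    have h3 : ENNReal.ofReal ((1 / (Real.pi * R)) ^ q) * ν Set.univ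
        < ENNReal.ofReal (A / 2) := by
      calc ENNReal.ofReal ((1 / (Real.pi * R)) ^ q) * ν Set.univ
          ≤ ENNReal.ofReal ((1 / (Real.pi * R)) ^ q) * ENNReal.ofReal B :=
            mul_le_mul_right hνuniv _
        _ = ENNReal.ofReal ((1 / (Real.pi * R)) ^ q * B) :=
            (ENNReal.ofReal_mul (by positivity)).symm
        _ < ENNReal.ofReal (A / 2) :=
            (ENNReal.ofReal_lt_ofReal_iff (by linarith)).mpr hkey
    calc ν (I n) + ENNReal.ofReal ((1 / (Real.pi * R)) ^ q) * ν Set.univ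
        < ENNReal.ofReal (A / 2) + ENNReal.ofReal (A / 2) := ENNReal.add_lt_add hn h3
      _ = ENNReal.ofReal A := by
          rw [← ENNReal.ofReal_add (by linarith) (by linarith)]
          norm_num
  exact (h2.trans_lt (hint.trans_lt hlt)).false
end
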